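/- Let p be an odd prime and define, for a unit vector |ψ⟩ ∈ (C^p)^{⊗n}, the stabilizer α-Rényi entropy M_{(α,p)}(|ψ⟩) = (1/(1−α)) log_p Σ_P Ξ_P^α(|ψ⟩) − n, where the sum is over phase-free Pauli operators and Ξ_P(|ψ⟩) = p^{−n}|⟨ψ|P|ψ⟩|². Then M_{(α,p)} is additive: M_{(α,p)}(|ψ_1⟩⊗|ψ_2⟩) = M_{(α,p)}(|ψ_1⟩) + M_{(α,p)}(|ψ_2⟩) for all α ≥ 0, α ≠ 1. -/
import Mathlib


open Matrix

/-- The `p`-th root of unity `ω = e^{2πi/p}`. -/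
noncomputable def omega (p : ℕ) : ℂ := Complex.exp (2 * Real.pi * Complex.I / p)

/-- The `n`-qudit Pauli operator `X(x)Z(z)`, acting as
`X(x)Z(z)|j⟩ = ω^{z·j} |j + x⟩`. -/
noncomputable def XZ (p n : ℕ) (x z : Fin n → ZMod p) :
    Matrix (Fin n → ZMod p) (Fin n → ZMod p) ℂ :=
  fun i j => if i = x + j then omega p ^ (∑ k, z k * j k : ZMod p).val else 0

/-- `Ξ_P(|ψ⟩) = p^{−n} |⟨ψ|P|ψ⟩|²` for the phase-free Pauli `P = X(x)Z(z)`. -/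
noncomputable def Xi (p n : ℕ) [NeZero p] (ψ : (Fin n → ZMod p) → ℂ)
    (x z : Fin n → ZMod p) : ℝ :=
  (1 / (p : ℝ) ^ n) * ‖star ψ ⬝ᵥ (XZ p n x z).mulVec ψ‖ ^ 2

/-- The stabilizer α-Rényi entropy
`M_{(α,p)}(|ψ⟩) = (1/(1−α)) log_p Σ_P Ξ_P^α(|ψ⟩) − n`. -/
noncomputable def Mren (p : ℕ) [NeZero p] (α : ℝ) (n : ℕ)
    (ψ : (Fin n → ZMod p) → ℂ) : ℝ :=
  (1 / (1 - α)) *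
      Real.logb p (∑ x : Fin n → ZMod p, ∑ z : Fin n → ZMod p, Xi p n ψ x z ^ α) - n

/-- The tensor product of an `n₁`-qudit state and an `n₂`-qudit state. -/
noncomputable def tensorState (p n₁ n₂ : ℕ) (ψ₁ : (Fin n₁ → ZMod p) → ℂ)
    (ψ₂ : (Fin n₂ → ZMod p) → ℂ) : (Fin (n₁ + n₂) → ZMod p) → ℂ :=
  fun j => ψ₁ (fun i => j (Fin.castAdd n₂ i)) * ψ₂ (fun i => j (Fin.natAdd n₁ i))

lemma omega_pow_p (p : ℕ) (hp : p ≠ 0) : omega p ^ p = 1 := by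
  have hpc : (p : ℂ) ≠ 0 := Nat.cast_ne_zero.mpr hp
  rw [omega, ← Complex.exp_nat_mul, mul_comm, div_mul_cancel₀ _ hpc]
  simpa using Complex.exp_int_mul_two_pi_mul_I 1


lemma omega_pow_mod (p m : ℕ) (hp : p ≠ 0) : omega p ^ (m % p) = omega p ^ m := by
  conv_rhs => rw [← Nat.div_add_mod m p]
  rw [pow_add, pow_mul, omega_pow_p p hp, one_pow, one_mul]

lemma omega_pow_val_add (p : ℕ) [NeZero p] (a b : ZMod p) :
    omega p ^ (a + b).val = omega p ^ a.val * omega p ^ b.val := by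
  rw [ZMod.val_add, omega_pow_mod p _ (NeZero.ne p), pow_add]

lemma dot_eq (p n : ℕ) [NeZero p] (ψ : (Fin n → ZMod p) → ℂ) (x z : Fin n → ZMod p) :
    star ψ ⬝ᵥ (XZ p n x z).mulVec ψ =
      ∑ j, (starRingEnd ℂ) (ψ (x + j)) *
        (omega p ^ (∑ k, z k * j k : ZMod p).val * ψ j) := by
  simp only [dotProduct, mulVec, XZ, Pi.star_apply, RCLike.star_def, Finset.mul_sum]
  rw [Finset.sum_comm]
  refine Finset.sum_congr rfl fun j _ => ?_
  rw [Finset.sum_eq_single (x + j)]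
  · simp [mul_assoc]
  · intro i _ hi
    simp [if_neg hi]
  · simp

lemma Xi_tensor (p : ℕ) [NeZero p] (n₁ n₂ : ℕ) (ψ₁ : (Fin n₁ → ZMod p) → ℂ)
    (ψ₂ : (Fin n₂ → ZMod p) → ℂ) (x₁ z₁ : Fin n₁ → ZMod p) (x₂ z₂ : Fin n₂ → ZMod p) :
    Xi p (n₁ + n₂) (tensorState p n₁ n₂ ψ₁ ψ₂) (Fin.append x₁ x₂) (Fin.append z₁ z₂) =
      Xi p n₁ ψ₁ x₁ z₁ * Xi p n₂ ψ₂ x₂ z₂ := by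
  have key : star (tensorState p n₁ n₂ ψ₁ ψ₂) ⬝ᵥ
      (XZ p (n₁ + n₂) (Fin.append x₁ x₂) (Fin.append z₁ z₂)).mulVec
        (tensorState p n₁ n₂ ψ₁ ψ₂) =
      (star ψ₁ ⬝ᵥ (XZ p n₁ x₁ z₁).mulVec ψ₁) * (star ψ₂ ⬝ᵥ (XZ p n₂ x₂ z₂).mulVec ψ₂) := by
    rw [dot_eq, dot_eq, dot_eq]
    rw [← Equiv.sum_comp (Fin.appendEquiv n₁ n₂)]
    rw [Fintype.sum_prod_type, Finset.sum_mul_sum]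
    refine Finset.sum_congr rfl fun j₁ _ => Finset.sum_congr rfl fun j₂ _ => ?_
    have happ : Fin.appendEquiv n₁ n₂ (j₁, j₂) = Fin.append j₁ j₂ := rfl
    have hadd : Fin.append x₁ x₂ + Fin.append j₁ j₂ = Fin.append (x₁ + j₁) (x₂ + j₂) := by
      funext k
      refine Fin.addCases (fun i => ?_) (fun i => ?_) k <;>
        simp [Fin.append_left, Fin.append_right]
    have hsum : (∑ k, Fin.append z₁ z₂ k * Fin.append j₁ j₂ k : ZMod p) =
        (∑ k, z₁ k * j₁ k) + (∑ k, z₂ k * j₂ k) := by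
      rw [Fin.sum_univ_add]
      simp [Fin.append_left, Fin.append_right]
    rw [happ, hadd, hsum, omega_pow_val_add]
    have h₁ : tensorState p n₁ n₂ ψ₁ ψ₂ (Fin.append (x₁ + j₁) (x₂ + j₂)) =
        ψ₁ (x₁ + j₁) * ψ₂ (x₂ + j₂) := by
      simp only [tensorState, Fin.append_left, Fin.append_right]
    have h₂ : tensorState p n₁ n₂ ψ₁ ψ₂ (Fin.append j₁ j₂) = ψ₁ j₁ * ψ₂ j₂ := by
      simp [tensorState, Fin.append_left, Fin.append_right]
    rw [h₁, h₂, RingHom.map_mul]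
    ring
  rw [Xi, Xi, Xi, key, norm_mul, mul_pow, pow_add]
  ring

/-- the stabilizer α-Rényi entropy is additive under tensor products
of unit vectors, for every `α ≥ 0`, `α ≠ 1`. -/
theorem stmt14 (p : ℕ) [Fact p.Prime] (hodd : Odd p) (α : ℝ) (hα : 0 ≤ α) (hα1 : α ≠ 1)
    (n₁ n₂ : ℕ) (ψ₁ : (Fin n₁ → ZMod p) → ℂ) (ψ₂ : (Fin n₂ → ZMod p) → ℂ)
    (h₁ : ∑ i, ‖ψ₁ i‖ ^ 2 = 1) (h₂ : ∑ i, ‖ψ₂ i‖ ^ 2 = 1) :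
    Mren p α (n₁ + n₂) (tensorState p n₁ n₂ ψ₁ ψ₂) =
      Mren p α n₁ ψ₁ + Mren p α n₂ ψ₂ := by
  have hXi_nonneg : ∀ (n : ℕ) (ψ : (Fin n → ZMod p) → ℂ) (x z : Fin n → ZMod p),
      0 ≤ Xi p n ψ x z := by
    intro n ψ x z
    apply mul_nonneg <;> positivity
  have hXi0 : ∀ (n : ℕ) (ψ : (Fin n → ZMod p) → ℂ), (∑ i, ‖ψ i‖ ^ 2 = 1) →
      0 < Xi p n ψ 0 0 := by
    intro n ψ h
    have hd : star ψ ⬝ᵥ (XZ p n 0 0).mulVec ψ = ∑ j, (starRingEnd ℂ) (ψ j) * ψ j := by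
      rw [dot_eq]; simp
    have hsum : (∑ j, (starRingEnd ℂ) (ψ j) * ψ j) = ((∑ j, ‖ψ j‖ ^ 2 : ℝ) : ℂ) := by
      push_cast
      refine Finset.sum_congr rfl fun j _ => ?_
      rw [mul_comm, Complex.mul_conj, Complex.normSq_eq_norm_sq]
      norm_cast
    rw [Xi, hd, hsum, h]
    have hp0 : (0:ℝ) < (p : ℝ) ^ n :=
      pow_pos (by exact_mod_cast (Fact.out : p.Prime).pos) n
    rw [Complex.ofReal_one, norm_one, one_pow, mul_one]
    exact one_div_pos.mpr hp0
  have hTpos : ∀ (n : ℕ) (ψ : (Fin n → ZMod p) → ℂ), (∑ i, ‖ψ i‖ ^ 2 = 1) →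
      0 < ∑ x : Fin n → ZMod p, ∑ z : Fin n → ZMod p, Xi p n ψ x z ^ α := by
    intro n ψ h
    refine Finset.sum_pos' (fun x _ => Finset.sum_nonneg fun z _ =>
      Real.rpow_nonneg (hXi_nonneg n ψ x z) α) ⟨0, Finset.mem_univ _, ?_⟩
    exact Finset.sum_pos' (fun z _ => Real.rpow_nonneg (hXi_nonneg n ψ 0 z) α)
      ⟨0, Finset.mem_univ _, Real.rpow_pos_of_pos (hXi0 n ψ h) α⟩
  have hfac : (∑ x : Fin (n₁ + n₂) → ZMod p, ∑ z : Fin (n₁ + n₂) → ZMod p,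
        Xi p (n₁ + n₂) (tensorState p n₁ n₂ ψ₁ ψ₂) x z ^ α) =
      (∑ x : Fin n₁ → ZMod p, ∑ z : Fin n₁ → ZMod p, Xi p n₁ ψ₁ x z ^ α) *
      (∑ x : Fin n₂ → ZMod p, ∑ z : Fin n₂ → ZMod p, Xi p n₂ ψ₂ x z ^ α) := by
    rw [← Equiv.sum_comp (Fin.appendEquiv n₁ n₂)
      (fun x => ∑ z : Fin (n₁+n₂) → ZMod p,
        Xi p (n₁+n₂) (tensorState p n₁ n₂ ψ₁ ψ₂) x z ^ α)]
    rw [Fintype.sum_prod_type, Finset.sum_mul_sum]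
    refine Finset.sum_congr rfl fun x₁ _ => Finset.sum_congr rfl fun x₂ _ => ?_
    rw [← Equiv.sum_comp (Fin.appendEquiv n₁ n₂)]
    rw [Fintype.sum_prod_type, Finset.sum_mul_sum]
    refine Finset.sum_congr rfl fun z₁ _ => Finset.sum_congr rfl fun z₂ _ => ?_
    rw [show Fin.appendEquiv n₁ n₂ (x₁, x₂) = Fin.append x₁ x₂ from rfl,
      show Fin.appendEquiv n₁ n₂ (z₁, z₂) = Fin.append z₁ z₂ from rfl]
    rw [Xi_tensor, Real.mul_rpow (hXi_nonneg _ _ _ _) (hXi_nonneg _ _ _ _)]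
  have hA := hTpos n₁ ψ₁ h₁
  have hB := hTpos n₂ ψ₂ h₂
  simp only [Mren]
  rw [hfac, Real.logb_mul (ne_of_gt hA) (ne_of_gt hB)]
  push_cast
  ring
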